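/- (Unbiasedness of the SGC gradient estimator.) Let g_1,…,g_m ∈ ℝ^ℓ be arbitrary vectors and define the random vector ĝ := Σ_{j=1}^n B_j · Σ_{i ∈ S_j} g_i/(d_i·(1−p)). Then E[ĝ] = Σ_{i=1}^m g_i. -/

import Mathlib

open MeasureTheory ProbabilityTheory Finset

/-- **Unbiasedness of the SGC gradient estimator.**
If `ĝ = Σ_j B_j • Σ_{i ∈ S_j} g_i / (d_i (1−p))` then `E[ĝ] = Σ_i g_i`. -/
theorem sgc_unbiased
    (m n l : ℕ) (hn : 1 ≤ n)
    (S : Fin n → Finset (Fin m)) (d : Fin m → ℕ) (hdpos : ∀ i, 0 < d i)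
    (hdeg : ∀ i : Fin m, (Finset.univ.filter (fun j => i ∈ S j)).card = d i)
    (p : ℝ) (hp0 : 0 ≤ p) (hp1 : p < 1)
    (Ω : Type*) [MeasureSpace Ω] [IsProbabilityMeasure (ℙ : Measure Ω)]
    (B : Fin n → Ω → ℝ)
    (hB01 : ∀ j ω, B j ω = 0 ∨ B j ω = 1)
    (hBmeas : ∀ j, Measurable (B j))
    (hBp : ∀ j, (ℙ : Measure Ω) {ω | B j ω = 1} = ENNReal.ofReal (1 - p))
    (g : Fin m → EuclideanSpace ℝ (Fin l))
    (ghat : Ω → EuclideanSpace ℝ (Fin l))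
    (hghat : ∀ ω, ghat ω = ∑ j, B j ω • ∑ i ∈ S j, ((d i : ℝ) * (1 - p))⁻¹ • g i) :
    ∫ ω, ghat ω = ∑ i, g i := by
  have hc : (1 - p) ≠ 0 := by linarith
  have hsind : ∀ j, B j = Set.indicator {ω | B j ω = 1} (fun _ => (1:ℝ)) := by
    intro j; funext ω
    rcases hB01 j ω with h | h
    · rw [h]; symm; apply Set.indicator_of_notMem; simp [Set.mem_setOf_eq, h]
    · rw [h]; symm; apply Set.indicator_of_mem; simpa [Set.mem_setOf_eq]
  have hmeasset : ∀ j, MeasurableSet {ω | B j ω = 1} := fun j =>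
    (hBmeas j) (measurableSet_singleton 1)
  have hint : ∀ j, Integrable (B j) := by
    intro j; rw [hsind j]
    exact (integrable_const (1:ℝ)).indicator (hmeasset j)
  have hEB : ∀ j, ∫ ω, B j ω = 1 - p := by
    intro j
    rw [hsind j, MeasureTheory.integral_indicator_const _ (hmeasset j), measureReal_def, hBp j,
      ENNReal.toReal_ofReal (by linarith : (0:ℝ) ≤ 1 - p)]
    simp
  have key : ∫ ω, ghat ω = ∑ j, (1 - p) • ∑ i ∈ S j, ((d i : ℝ) * (1 - p))⁻¹ • g i := by
    simp only [hghat]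
    rw [integral_finset_sum]
    · exact Finset.sum_congr rfl fun j _ => by rw [integral_smul_const, hEB j]
    · exact fun j _ => (hint j).smul_const _
  rw [key]
  calc ∑ j, (1-p) • ∑ i ∈ S j, ((d i : ℝ) * (1 - p))⁻¹ • g i
      = ∑ j, ∑ i ∈ S j, ((d i : ℝ))⁻¹ • g i := by
        refine Finset.sum_congr rfl fun j _ => ?_
        rw [Finset.smul_sum]
        refine Finset.sum_congr rfl fun i _ => ?_
        rw [smul_smul, mul_inv, ← mul_assoc, mul_comm (1-p), mul_assoc,
          mul_inv_cancel₀ hc, mul_one]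
    _ = ∑ i, ∑ j ∈ Finset.univ.filter (fun j => i ∈ S j), ((d i : ℝ))⁻¹ • g i := by
        have h1 : ∀ j : Fin n, ∑ i ∈ S j, ((d i : ℝ))⁻¹ • g i
            = ∑ i, if i ∈ S j then ((d i : ℝ))⁻¹ • g i else 0 := fun j => by
          rw [Finset.sum_ite_mem, Finset.univ_inter]
        simp only [h1, Finset.sum_filter]
        exact Finset.sum_comm
    _ = ∑ i, g i := by
        refine Finset.sum_congr rfl fun i _ => ?_
        rw [Finset.sum_const, hdeg i, ← Nat.cast_smul_eq_nsmul ℝ, smul_smul,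
          mul_inv_cancel₀ (by exact_mod_cast (hdpos i).ne'), one_smul]
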